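/- (Proposition 1, first opening angle.) Let z̄ ∈ ℝ², λ1, λ2, w1, w2 > 0, α ≥ 0, ε ≥ 0 with α + ε > 0, and set θ1 = arctan(−ε·w1 / (α·λ2 + ε·w2)). Then for all z, z' ∈ R2, one has S_gen(z) = S_gen(z') if and only if (z'1 − z1)·sin θ1 = (z'2 − z2)·cos θ1; that is, within R2 the lines of equal S_gen-values make polar angle θ1 with the f1-axis. -/
import Mathlib


open Real

/-- The generalized scalarizing function `S_gen`. -/
noncomputable def Sgen (zb : ℝ × ℝ) (lam1 lam2 w1 w2 α ε : ℝ) (z : ℝ × ℝ) : ℝ :=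
  α * max (lam1 * |zb.1 - z.1|) (lam2 * |zb.2 - z.2|) +
    ε * (w1 * |zb.1 - z.1| + w2 * |zb.2 - z.2|)

/-- Proposition 1, first opening angle: within the region `R2`, two points have equal
`S_gen`-value iff their displacement lies along polar angle
`θ1 = arctan (−ε·w1 / (α·λ2 + ε·w2))`. -/
theorem sgen_equi_lines_R2 (zb : ℝ × ℝ) (lam1 lam2 w1 w2 α ε : ℝ)
    (hl1 : 0 < lam1) (hl2 : 0 < lam2) (hw1 : 0 < w1) (hw2 : 0 < w2)
    (hα : 0 ≤ α) (hε : 0 ≤ ε) (hαε : 0 < α + ε)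
    (θ1 : ℝ) (hθ1 : θ1 = Real.arctan (-(ε * w1) / (α * lam2 + ε * w2))) :
    ∀ z z' : ℝ × ℝ,
      z.1 ≤ zb.1 → z.2 ≤ zb.2 → lam1 * (zb.1 - z.1) ≤ lam2 * (zb.2 - z.2) →
      z'.1 ≤ zb.1 → z'.2 ≤ zb.2 → lam1 * (zb.1 - z'.1) ≤ lam2 * (zb.2 - z'.2) →
      (Sgen zb lam1 lam2 w1 w2 α ε z = Sgen zb lam1 lam2 w1 w2 α ε z' ↔
        (z'.1 - z.1) * Real.sin θ1 = (z'.2 - z.2) * Real.cos θ1) := by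
  intro z z' h1 h2 h3 h1' h2' h3'
  -- C := α*lam2 + ε*w2 > 0
  have hC : 0 < α * lam2 + ε * w2 := by
    rcases lt_or_ge 0 α with h | h
    · have : 0 < α * lam2 := mul_pos h hl2
      nlinarith [mul_nonneg hε hw2.le]
    · have hα0 : α = 0 := le_antisymm h hα
      have hε0 : 0 < ε := by nlinarith
      have : 0 < ε * w2 := mul_pos hε0 hw2
      nlinarith
  set C := α * lam2 + ε * w2 with hCdef
  have hcos : 0 < Real.cos θ1 := by
    rw [hθ1]; exact Real.cos_arctan_pos _
  have htan : Real.tan θ1 = -(ε * w1) / C := by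
    rw [hθ1]; exact Real.tan_arctan _
  have hsin : Real.sin θ1 = (-(ε * w1) / C) * Real.cos θ1 := by
    rw [← htan, Real.tan_eq_sin_div_cos]
    field_simp
  -- simplify Sgen on R2
  have key : ∀ y : ℝ × ℝ, y.1 ≤ zb.1 → y.2 ≤ zb.2 →
      lam1 * (zb.1 - y.1) ≤ lam2 * (zb.2 - y.2) →
      Sgen zb lam1 lam2 w1 w2 α ε y
        = ε * w1 * (zb.1 - y.1) + C * (zb.2 - y.2) := by
    intro y hy1 hy2 hy3
    have a1 : |zb.1 - y.1| = zb.1 - y.1 := abs_of_nonneg (by linarith)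
    have a2 : |zb.2 - y.2| = zb.2 - y.2 := abs_of_nonneg (by linarith)
    simp only [Sgen, a1, a2]
    rw [max_eq_right hy3]
    ring
  rw [key z h1 h2 h3, key z' h1' h2' h3', hsin]
  have hCne : C ≠ 0 := ne_of_gt hC
  constructor
  · intro h
    have h4 : (z'.1 - z.1) * (-(ε * w1) / C) = z'.2 - z.2 := by
      field_simp
      linear_combination -h
    rw [← mul_assoc, h4]
  · intro h
    have h4 : (z'.1 - z.1) * (-(ε * w1) / C) = z'.2 - z.2 :=
      mul_right_cancel₀ (ne_of_gt hcos) (by rw [mul_assoc]; exact h)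
    have h5 : (z'.1 - z.1) * (-(ε * w1)) = (z'.2 - z.2) * C := by
      rw [← mul_div_assoc] at h4
      exact (div_eq_iff hCne).mp h4
    linear_combination -h5
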